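/- For any three pairwise relative positions of half-open intervals α=(a,b], β=(a',b'] in ℝ with {a,b}∩{a',b'} possibly nonempty, the symmetrized Euler form (α,β)=⟨α,β⟩+⟨β,α⟩ takes values only in {−2,−1,0,1,2}; moreover (α,β)=2 if and only if α=β. -/

import Mathlib

/-- The bilinear form <f,g> = Σ_x f₋(x)·(g₋(x) − g₊(x)), where h₋/h₊ denote the
left/right limits of h. -/
noncomputable def pairing (f g : ℝ → ℝ) : ℝ :=
  ∑ᶠ x : ℝ, Function.leftLim f x * (Function.leftLim g x - Function.rightLim g x)

/-- The characteristic function of the half-open interval (a,b] in ℝ. -/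
noncomputable def ind (a b : ℝ) : ℝ → ℝ := Set.indicator (Set.Ioc a b) (fun _ => 1)

/-- The symmetrized Euler form (α,β) = <1_α,1_β> + <1_β,1_α> for α=(a,b], β=(a',b']. -/
noncomputable def epair (a b a' b' : ℝ) : ℝ :=
  pairing (ind a b) (ind a' b') + pairing (ind a' b') (ind a b)

open Function Filter Set Topology

lemma ind_of_mem {a b x : ℝ} (h : x ∈ Set.Ioc a b) : ind a b x = 1 :=
  Set.indicator_of_mem h _

lemma ind_of_not_mem {a b x : ℝ} (h : x ∉ Set.Ioc a b) : ind a b x = 0 :=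
  Set.indicator_of_notMem h _

lemma leftLim_ind (a b : ℝ) (x : ℝ) :
    leftLim (ind a b) x = if x ∈ Set.Ioc a b then 1 else 0 := by
  have hne : (𝓝[<] x) ≠ (⊥ : Filter ℝ) := (nhdsLT_neBot x).ne'
  rcases le_or_gt x a with h | h
  · have hev : ind a b =ᶠ[𝓝[<] x] fun _ => 0 := by
      filter_upwards [self_mem_nhdsWithin] with y hy
      exact ind_of_not_mem (fun hm => absurd hm.1 (not_lt.2 ((le_of_lt hy).trans h)))
    rw [leftLim_eq_of_tendsto (h := ⟨hne⟩) (Tendsto.congr' hev.symm tendsto_const_nhds)]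
    have : x ∉ Set.Ioc a b := fun hm => absurd hm.1 (not_lt.2 h)
    simp [this]
  · rcases le_or_gt x b with h2 | h2
    · have hev : ind a b =ᶠ[𝓝[<] x] fun _ => 1 := by
        filter_upwards [Ioo_mem_nhdsLT h] with y hy
        exact ind_of_mem ⟨hy.1, hy.2.le.trans h2⟩
      rw [leftLim_eq_of_tendsto (h := ⟨hne⟩) (Tendsto.congr' hev.symm tendsto_const_nhds)]
      simp [Set.mem_Ioc, h, h2]
    · have hev : ind a b =ᶠ[𝓝[<] x] fun _ => 0 := by
        filter_upwards [Ioo_mem_nhdsLT h2] with y hy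
        exact ind_of_not_mem (fun hm => absurd hm.2 (not_le.2 hy.1))
      rw [leftLim_eq_of_tendsto (h := ⟨hne⟩) (Tendsto.congr' hev.symm tendsto_const_nhds)]
      have : x ∉ Set.Ioc a b := fun hm => absurd hm.2 (not_le.2 h2)
      simp [this]

lemma rightLim_ind (a b : ℝ) (x : ℝ) :
    rightLim (ind a b) x = if x ∈ Set.Ico a b then 1 else 0 := by
  have hne : (𝓝[>] x) ≠ (⊥ : Filter ℝ) := (nhdsGT_neBot x).ne'
  rcases lt_or_ge x a with h | h
  · have hev : ind a b =ᶠ[𝓝[>] x] fun _ => 0 := by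
      filter_upwards [Ioo_mem_nhdsGT h] with y hy
      exact ind_of_not_mem (fun hm => absurd hm.1 (not_lt.2 hy.2.le))
    rw [rightLim_eq_of_tendsto (h := ⟨hne⟩) (Tendsto.congr' hev.symm tendsto_const_nhds)]
    have : x ∉ Set.Ico a b := fun hm => absurd hm.1 (not_le.2 h)
    simp [this]
  · rcases lt_or_ge x b with h2 | h2
    · have hev : ind a b =ᶠ[𝓝[>] x] fun _ => 1 := by
        filter_upwards [Ioo_mem_nhdsGT h2] with y hy
        exact ind_of_mem ⟨lt_of_le_of_lt h hy.1, hy.2.le⟩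
      rw [rightLim_eq_of_tendsto (h := ⟨hne⟩) (Tendsto.congr' hev.symm tendsto_const_nhds)]
      simp [Set.mem_Ico, h, h2]
    · have hev : ind a b =ᶠ[𝓝[>] x] fun _ => 0 := by
        filter_upwards [self_mem_nhdsWithin] with y hy
        exact ind_of_not_mem (fun hm => absurd hm.2 (not_le.2 (lt_of_le_of_lt h2 hy)))
      rw [rightLim_eq_of_tendsto (h := ⟨hne⟩) (Tendsto.congr' hev.symm tendsto_const_nhds)]
      have : x ∉ Set.Ico a b := fun hm => absurd hm.2 (not_lt.2 h2)
      simp [this]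

lemma pairing_ind (a b a' b' : ℝ) (hab' : a' < b') :
    pairing (ind a b) (ind a' b') =
      (if b' ∈ Set.Ioc a b then (1:ℝ) else 0) - (if a' ∈ Set.Ioc a b then (1:ℝ) else 0) := by
  set F : ℝ → ℝ := fun x =>
    leftLim (ind a b) x * (leftLim (ind a' b') x - rightLim (ind a' b') x) with hF
  have key : ∀ x : ℝ, x ≠ a' → x ≠ b' → F x = 0 := by
    intro x hxa hxb
    have hiff : x ∈ Set.Ioc a' b' ↔ x ∈ Set.Ico a' b' := by
      simp only [Set.mem_Ioc, Set.mem_Ico]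
      constructor
      · rintro ⟨h1, h2⟩; exact ⟨h1.le, h2.lt_of_ne hxb⟩
      · rintro ⟨h1, h2⟩; exact ⟨h1.lt_of_ne (Ne.symm hxa), h2.le⟩
    simp only [hF, leftLim_ind, rightLim_ind]
    rw [if_congr hiff rfl rfl]
    ring
  have hsupp : Function.support F ⊆ (↑({b', a'} : Finset ℝ) : Set ℝ) := by
    intro x hx
    simp only [Finset.coe_insert, Finset.coe_singleton, Set.mem_insert_iff,
      Set.mem_singleton_iff]
    by_contra hc
    push_neg at hc
    exact hx (key x hc.2 hc.1)
  have hFb : F b' = (if b' ∈ Set.Ioc a b then (1:ℝ) else 0) := by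
    have h1 : b' ∈ Set.Ioc a' b' := ⟨hab', le_refl _⟩
    have h2 : b' ∉ Set.Ico a' b' := fun hm => absurd hm.2 (lt_irrefl _)
    simp [hF, leftLim_ind, rightLim_ind, h1, h2, hab']
  have hFa : F a' = -(if a' ∈ Set.Ioc a b then (1:ℝ) else 0) := by
    have h1 : a' ∉ Set.Ioc a' b' := fun hm => absurd hm.1 (lt_irrefl _)
    have h2 : a' ∈ Set.Ico a' b' := ⟨le_refl _, hab'⟩
    simp only [hF, leftLim_ind, rightLim_ind, h1, h2, if_true, if_false]
    split_ifs <;> ring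
  have : pairing (ind a b) (ind a' b') = ∑ x ∈ ({b', a'} : Finset ℝ), F x :=
    finsum_eq_finset_sum_of_support_subset F hsupp
  rw [this, Finset.sum_pair hab'.ne', hFb, hFa]
  ring

theorem stmt19 : ∀ a b a' b' : ℝ, a < b → a' < b' →
    epair a b a' b' ∈ ({-2, -1, 0, 1, 2} : Set ℝ) ∧
    (epair a b a' b' = 2 ↔ Set.Ioc a b = Set.Ioc a' b') := by
  intro a b a' b' hab hab'
  have e : epair a b a' b' =
      ((if b' ∈ Set.Ioc a b then (1:ℝ) else 0) - (if a' ∈ Set.Ioc a b then (1:ℝ) else 0))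
      + ((if b ∈ Set.Ioc a' b' then (1:ℝ) else 0) - (if a ∈ Set.Ioc a' b' then (1:ℝ) else 0)) := by
    rw [epair, pairing_ind a b a' b' hab', pairing_ind a' b' a b hab]
  constructor
  · rw [e]
    simp only [Set.mem_insert_iff, Set.mem_singleton_iff]
    split_ifs <;> norm_num
  · rw [e]
    constructor
    · intro h
      by_cases hP : b' ∈ Set.Ioc a b <;> by_cases hQ : a' ∈ Set.Ioc a b <;>
        by_cases hR : b ∈ Set.Ioc a' b' <;> by_cases hS : a ∈ Set.Ioc a' b' <;>
        norm_num [hP, hQ, hR, hS] at h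
      simp only [Set.mem_Ioc] at hP hQ hR hS
      have hb : b = b' := le_antisymm hR.2 hP.2
      have ha1 : a' ≤ a := by
        by_contra hc; push_neg at hc
        exact hQ ⟨hc, hR.1.le⟩
      have ha2 : a ≤ a' := by
        by_contra hc; push_neg at hc
        exact hS ⟨hc, hab.le.trans hb.le⟩
      rw [le_antisymm ha2 ha1, hb]
    · intro h
      have hb : b = b' := by
        have h1 : b ∈ Set.Ioc a' b' := h ▸ (⟨hab, le_refl _⟩ : b ∈ Set.Ioc a b)
        have h2 : b' ∈ Set.Ioc a b := by rw [h]; exact ⟨hab', le_refl _⟩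
        exact le_antisymm h1.2 h2.2
      have ha : a = a' := by
        by_contra hc
        rcases lt_or_gt_of_ne hc with hlt | hgt
        · have hm : min a' b ∈ Set.Ioc a b := ⟨lt_min hlt hab, min_le_right _ _⟩
          rw [h] at hm
          exact absurd hm.1 (not_lt.2 (min_le_left _ _))
        · have hm : min a b' ∈ Set.Ioc a' b' := ⟨lt_min hgt hab', min_le_right _ _⟩
          rw [← h] at hm
          exact absurd hm.1 (not_lt.2 (min_le_left _ _))
      have hP : b' ∈ Set.Ioc a b := by rw [ha, hb]; exact ⟨hab', le_refl _⟩
      have hQ : a' ∉ Set.Ioc a b := fun hm => absurd hm.1 (not_lt.2 ha.ge)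
      have hR : b ∈ Set.Ioc a' b' := by rw [← ha, ← hb]; exact ⟨hab, le_refl _⟩
      have hS : a ∉ Set.Ioc a' b' := fun hm => absurd hm.1 (not_lt.2 ha.le)
      norm_num [hP, hQ, hR, hS]
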